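/- If p(x) = M + ∑_{j=1}^{N} cos(λ_j x) ≥ 0 for all real x, with λ_j distinct positive integers, and m is a positive integer, then q(x) = M + ∑_{j : m ∣ λ_j} cos(λ_j x) ≥ 0 for all real x. -/

import Mathlib

open Complex Finset

lemma aux_sum_cos (m l : ℕ) (hm : 0 < m) (x : ℝ) :
    ∑ t ∈ Finset.range m, Real.cos (l * (x + 2*Real.pi*t/m)) =
      if m ∣ l then m * Real.cos (l*x) else 0 := by
  set ζ : ℂ := Complex.exp (((2*Real.pi*l/m : ℝ) : ℂ) * Complex.I) with hζ
  have hterm : ∀ t ∈ Finset.range m,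
      Real.cos (l * (x + 2*Real.pi*t/m)) =
        (Complex.exp (((l*x : ℝ) : ℂ) * Complex.I) * ζ ^ t).re := by
    intro t _
    have h1 : ((l * (x + 2*Real.pi*t/m) : ℝ) : ℂ) * Complex.I
        = ((l*x : ℝ) : ℂ) * Complex.I + (t : ℕ) * (((2*Real.pi*l/m : ℝ) : ℂ) * Complex.I) := by
      have : (m : ℂ) ≠ 0 := by exact_mod_cast hm.ne'
      push_cast
      field_simp
    rw [← Complex.exp_ofReal_mul_I_re, h1, Complex.exp_add, Complex.exp_nat_mul]
  rw [Finset.sum_congr rfl hterm, ← Complex.re_sum, ← Finset.mul_sum]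
  by_cases hd : m ∣ l
  · obtain ⟨k, hk⟩ := hd
    have hζ1 : ζ = 1 := by
      rw [hζ]
      have : ((2*Real.pi*l/m : ℝ) : ℂ) * Complex.I = (k : ℤ) * (2 * Real.pi * Complex.I) := by
        have hm' : (m : ℝ) ≠ 0 := by exact_mod_cast hm.ne'
        have : (2*Real.pi*l/m : ℝ) = k * (2*Real.pi) := by
          rw [hk]; push_cast; field_simp
        rw [this]; push_cast; ring
      rw [this, Complex.exp_int_mul_two_pi_mul_I]
    simp only [hζ1, one_pow, Finset.sum_const, Finset.card_range, nsmul_eq_mul, mul_one]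
    have hdvd : m ∣ l := ⟨k, hk⟩
    rw [if_pos hdvd, mul_comm]
    simp only [Complex.mul_re, Complex.natCast_re, Complex.natCast_im, zero_mul, sub_zero]
    congr 1
    exact Complex.exp_ofReal_mul_I_re _
  · have hζm : ζ ^ m = 1 := by
      rw [hζ, ← Complex.exp_nat_mul]
      have : (m : ℂ) * (((2*Real.pi*l/m : ℝ) : ℂ) * Complex.I) = (l : ℤ) * (2 * Real.pi * Complex.I) := by
        have hm' : (m : ℂ) ≠ 0 := by exact_mod_cast hm.ne'
        push_cast
        field_simp
      rw [this, Complex.exp_int_mul_two_pi_mul_I]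
    have hζne : ζ ≠ 1 := by
      intro h
      rw [hζ, Complex.exp_eq_one_iff] at h
      obtain ⟨n, hn⟩ := h
      apply hd
      have hI : (Complex.I : ℂ) ≠ 0 := Complex.I_ne_zero
      have h2 : ((2*Real.pi*l/m : ℝ) : ℂ) = ((n * (2*Real.pi) : ℝ) : ℂ) := by
        rw [show ((n:ℂ) * (2*Real.pi*I)) = ((n*(2*Real.pi):ℝ):ℂ) * I by push_cast; ring] at hn
        exact mul_right_cancel₀ hI hn
      have h3 : (2*Real.pi*l/m : ℝ) = n * (2*Real.pi) := by exact_mod_cast h2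
      have hm' : (m : ℝ) ≠ 0 := by exact_mod_cast hm.ne'
      have hπ : Real.pi ≠ 0 := Real.pi_ne_zero
      have h4 : (l : ℝ) = (n : ℝ) * m := by
        have h2π : (2*Real.pi : ℝ) ≠ 0 := by positivity
        apply mul_left_cancel₀ h2π
        field_simp at h3
        linear_combination (2*Real.pi) * h3
      have h5 : (l : ℤ) = n * m := by exact_mod_cast h4
      exact Int.natCast_dvd_natCast.mp ⟨n, by rw [h5]; ring⟩
    rw [geom_sum_eq hζne, hζm, if_neg hd]
    simp

theorem stmt_13 (M : ℝ) (N : ℕ) (lam : Fin N → ℕ)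
    (hinj : Function.Injective lam) (hpos : ∀ j, 0 < lam j)
    (hp : ∀ x : ℝ, 0 ≤ M + ∑ j, Real.cos (lam j * x))
    (m : ℕ) (hm : 0 < m) :
    ∀ x : ℝ, 0 ≤ M + ∑ j ∈ Finset.univ.filter (fun j => m ∣ lam j),
      Real.cos (lam j * x) := by
  intro x
  have key : 0 ≤ ∑ t ∈ Finset.range m, (M + ∑ j, Real.cos (lam j * (x + 2*Real.pi*t/m))) :=
    Finset.sum_nonneg fun t _ => hp _
  have heq : ∑ t ∈ Finset.range m, (M + ∑ j, Real.cos (lam j * (x + 2*Real.pi*t/m)))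
      = m * (M + ∑ j ∈ Finset.univ.filter (fun j => m ∣ lam j), Real.cos (lam j * x)) := by
    rw [Finset.sum_add_distrib, Finset.sum_const, Finset.card_range, Finset.sum_comm]
    have : ∀ j : Fin N, ∑ t ∈ Finset.range m, Real.cos (lam j * (x + 2*Real.pi*t/m))
        = if m ∣ lam j then (m : ℝ) * Real.cos (lam j * x) else 0 :=
      fun j => aux_sum_cos m (lam j) hm x
    rw [Finset.sum_congr rfl fun j _ => this j, Finset.sum_ite, Finset.sum_const_zero,
      ← Finset.mul_sum]
    push_cast
    ring
  rw [heq] at key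
  have hm' : (0:ℝ) < m := by exact_mod_cast hm
  nlinarith [key]
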